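/- Assume 2^ℵ₀ = ℵ₂. Then there exists a sequence ⟨σ_α : α < ω₂⟩ of functions σ_α : ω₂ → ω₁ such that for all α < β < ω₂, the set {ξ < ω₂ : σ_α(ξ) = σ_β(ξ)} is countable. -/

import Mathlib

open Cardinal Ordinal Set

noncomputable section StronglyAD

universe u

/-- ω₂ as a subtype of ordinals. -/
abbrev SAD.O2 : Type (u + 1) := {o : Ordinal.{u} // o < (Cardinal.aleph 2).ord}
/-- ω₁ as a subtype of ordinals. -/
abbrev SAD.O1 : Type (u + 1) := {o : Ordinal.{u} // o < (Cardinal.aleph 1).ord}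

namespace SAD

lemma aleph2_eq_succ : Cardinal.aleph.{u} 2 = Order.succ (Cardinal.aleph 1) := by
  have : (2 : Ordinal) = Order.succ 1 := by
    rw [← Ordinal.add_one_eq_succ]; norm_num
  rw [this, Cardinal.aleph_succ]

lemma card_le_aleph1 {v : Ordinal.{u}} (hv : v < (Cardinal.aleph 2).ord) :
    v.card ≤ Cardinal.aleph 1 := by
  have := Cardinal.lt_ord.mp hv
  rwa [aleph2_eq_succ, Order.lt_succ_iff] at this

lemma ord2_limit : Order.IsSuccLimit ((Cardinal.aleph.{u} 2).ord) :=
  Cardinal.isSuccLimit_ord (Cardinal.aleph0_le_aleph _)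

lemma ord1_limit : Order.IsSuccLimit ((Cardinal.aleph.{u} 1).ord) :=
  Cardinal.isSuccLimit_ord (Cardinal.aleph0_le_aleph _)

lemma mk_lt_sub (v : Ordinal.{u}) :
    #{o : Ordinal.{u} // o < v} = Cardinal.lift.{u + 1} v.card := by
  exact Cardinal.mk_Iio_ordinal v

/-- An embedding between initial segments of ordinals from a cardinal inequality. -/
lemma exists_emb {a b : Ordinal.{u}} (h : a.card ≤ b.card) :
    Nonempty ({o : Ordinal.{u} // o < a} ↪ {o : Ordinal.{u} // o < b}) := by
  rw [← Cardinal.le_def, mk_lt_sub, mk_lt_sub]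
  exact Cardinal.lift_le.mpr h

/-- Initial segments below an ordinal `< ω₁` are countable. -/
lemma countable_seg {v : Ordinal.{u}} (hv : v < (Cardinal.aleph 1).ord) :
    Countable {o : Ordinal.{u} // o < v} := by
  rw [← Cardinal.mk_le_aleph0_iff, mk_lt_sub]
  have h1 : v.card < Cardinal.aleph 1 := Cardinal.lt_ord.mp hv
  have h2 : v.card ≤ Cardinal.aleph0 := by
    rwa [← Cardinal.succ_aleph0, Order.lt_succ_iff] at h1
  calc Cardinal.lift.{u + 1} v.card ≤ Cardinal.lift.{u + 1} Cardinal.aleph0 :=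
        Cardinal.lift_le.mpr h2
    _ = Cardinal.aleph0 := Cardinal.lift_aleph0

lemma O1_zero_lt : (0 : Ordinal.{u}) < (Cardinal.aleph.{u} 1).ord :=
  ord1_limit.pos

/-- An uncountable target: every countable subset of `O1` misses a point. -/
lemma exists_not_mem {F : Set O1.{u}} (hF : F.Countable) : ∃ y, y ∉ F := by
  by_contra hc
  push_neg at hc
  have huniv : F = Set.univ := Set.eq_univ_of_forall hc
  have : Countable O1 := Set.countable_univ_iff.mp (huniv ▸ hF)
  have hle : #O1 ≤ Cardinal.aleph0 := Cardinal.mk_le_aleph0_iff.mpr this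
  have hmk : #O1.{u} = Cardinal.lift.{u + 1} (Cardinal.aleph.{u} 1) := by
    rw [mk_lt_sub, Cardinal.card_ord]
  rw [hmk] at hle
  have hlt : Cardinal.aleph0 < Cardinal.lift.{u + 1} (Cardinal.aleph.{u} 1) :=
    Cardinal.aleph0_lt_lift.mpr Cardinal.aleph0_lt_aleph_one
  exact absurd hle (not_le.mpr hlt)

/-- For each `ξ < ω₂`, an embedding of `{o // o < ξ}` into ω₁. -/
def embS (ξ : O2.{u}) : {o : Ordinal.{u} // o < ξ.val} ↪ O1.{u} :=
  Classical.choice (exists_emb (by rw [Cardinal.card_ord]; exact card_le_aleph1 ξ.2))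

/-- `eFun ξ` : an ω₁-valued function on ω₂ injective below `ξ`. -/
def eFun (ξ : O2) : O2 → O1 := fun α =>
  if h : α.val < ξ.val then embS ξ ⟨α.val, h⟩ else ⟨0, O1_zero_lt⟩

lemma eFun_inj {ξ α α' : O2} (h : α < ξ) (h' : α' < ξ)
    (he : eFun ξ α = eFun ξ α') : α = α' := by
  have h1 : α.val < ξ.val := h
  have h2 : α'.val < ξ.val := h'
  simp only [eFun] at he
  rw [dif_pos h1, dif_pos h2] at he
  have h3 := (embS ξ).injective he
  have hval := congrArg Subtype.val h3
  exact Subtype.ext hval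

/-- Diagonalization/extension step. -/
lemma exists_step (β : O2) (τ : ∀ α : O2, α < β → O2 → O1)
    (hτ : ∀ α hα ξ, α < ξ → τ α hα ξ = eFun ξ α) :
    ∃ g : O2 → O1, (∀ ξ, β < ξ → g ξ = eFun ξ β) ∧
      ∀ α hα, Set.Countable {ξ | g ξ = τ α hα ξ} := by
  -- embeddings of `{≤ β}` and `{< β}` into ω₁
  have hβ1 : β.val + 1 < (Cardinal.aleph 2).ord := ord2_limit.succ_lt β.2
  obtain ⟨ι⟩ : Nonempty ({o : Ordinal // o < β.val + 1} ↪ O1) :=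
    exists_emb (by rw [Cardinal.card_ord]; exact card_le_aleph1 hβ1)
  obtain ⟨j⟩ : Nonempty ({o : Ordinal // o < β.val} ↪ O1) :=
    exists_emb (by rw [Cardinal.card_ord]; exact card_le_aleph1 β.2)
  -- forbidden sets
  set F : ∀ ξ : O2, ξ.val < β.val + 1 → Set O1 := fun ξ hξ =>
    {y | ∃ a : {o : Ordinal // o < β.val},
      j a ≤ ι ⟨ξ.val, hξ⟩ ∧ y = τ ⟨a.1, a.2.trans β.2⟩ a.2 ξ} with hF
  have hFc : ∀ ξ hξ, (F ξ hξ).Countable := by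
    intro ξ hξ
    have : F ξ hξ ⊆ (fun a : {o : Ordinal // o < β.val} => τ ⟨a.1, a.2.trans β.2⟩ a.2 ξ) ''
        {a | j a ≤ ι ⟨ξ.val, hξ⟩} := by
      rintro y ⟨a, ha, rfl⟩; exact ⟨a, ha, rfl⟩
    refine Set.Countable.mono this (Set.Countable.image ?_ _)
    rw [← Set.countable_coe_iff]
    have hcdom : Countable {o : Ordinal // o < (ι ⟨ξ.val, hξ⟩).val + 1} :=
      countable_seg (ord1_limit.succ_lt (ι ⟨ξ.val, hξ⟩).2)
    refine Function.Injective.countable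
      (f := fun a : {a // j a ≤ ι ⟨ξ.val, hξ⟩} =>
        (⟨(j a.1).val, Order.lt_succ_iff.mpr a.2⟩ :
          {o : Ordinal // o < (ι ⟨ξ.val, hξ⟩).val + 1})) ?_
    intro a b hab
    simp only [Subtype.mk.injEq] at hab
    exact Subtype.ext (j.injective (Subtype.ext (Subtype.mk.inj hab)))
  -- choose values
  choose pick hpick using fun (ξ : O2) (hξ : ξ.val < β.val + 1) => exists_not_mem (hFc ξ hξ)
  set g : O2 → O1 := fun ξ =>
    if hξ : ξ.val < β.val + 1 then pick ξ hξ else eFun ξ β with hg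
  refine ⟨g, ?_, ?_⟩
  · intro ξ hξ
    have h1 : ¬ ξ.val < β.val + 1 := by
      have : β.val < ξ.val := hξ
      exact not_lt.mpr (Order.succ_le_of_lt this)
    simp only [hg, dif_neg h1]
  · intro α hα
    set a0 : {o : Ordinal // o < β.val} := ⟨α.val, hα⟩ with ha0
    have hsub : {ξ : O2 | g ξ = τ α hα ξ} ⊆
        {ξ : O2 | ∃ hξ : ξ.val < β.val + 1, ι ⟨ξ.val, hξ⟩ < j a0} := by
      intro ξ hmem
      simp only [Set.mem_setOf_eq] at hmem ⊢
      by_cases hξ : ξ.val < β.val + 1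
      · refine ⟨hξ, ?_⟩
        by_contra hnot
        have hle : j a0 ≤ ι ⟨ξ.val, hξ⟩ := not_lt.mp hnot
        have hin : τ α hα ξ ∈ F ξ hξ := ⟨a0, hle, rfl⟩
        have hgξ : g ξ = pick ξ hξ := by simp only [hg, dif_pos hξ]
        have hpe : pick ξ hξ = τ α hα ξ := by rw [← hgξ]; exact hmem
        exact hpick ξ hξ (by rw [hpe]; exact hin)
      · exfalso
        have hβξ : β < ξ := by
          have : β.val + 1 ≤ ξ.val := not_lt.mp hξ
          have hvv : β.val < ξ.val := by
            rwa [Ordinal.add_one_eq_succ, Order.succ_le_iff] at this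
          exact hvv
        have hgξ : g ξ = eFun ξ β := by simp only [hg, dif_neg hξ]
        have hτξ : τ α hα ξ = eFun ξ α := hτ α hα ξ (hα.trans hβξ)
        have : eFun ξ β = eFun ξ α := by rw [← hgξ, ← hτξ, hmem]
        exact absurd (eFun_inj hβξ (hα.trans hβξ) this).symm (ne_of_lt hα)
    refine Set.Countable.mono hsub ?_
    rw [← Set.countable_coe_iff]
    have hcdom : Countable {o : Ordinal // o < (j a0).val} := countable_seg ((j a0).2)
    refine Function.Injective.countable
      (f := fun ξ : {ξ : O2 // ∃ hξ : ξ.val < β.val + 1, ι ⟨ξ.val, hξ⟩ < j a0} =>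
        (⟨(ι ⟨ξ.1.val, ξ.2.choose⟩).val, ξ.2.choose_spec⟩ :
          {o : Ordinal // o < (j a0).val})) ?_
    intro x y hxy
    simp only [Subtype.mk.injEq] at hxy
    have h3 := ι.injective (Subtype.ext hxy)
    have hval := congrArg Subtype.val h3
    exact Subtype.ext (Subtype.ext hval)

/-- Partial construction data: a function together with its tail condition. -/
def Pkg (β : O2.{u}) : Type (u + 1) := {g : O2 → O1 // ∀ ξ, β < ξ → g ξ = eFun ξ β}

lemma wfO2 : WellFounded ((· < ·) : O2.{u} → O2.{u} → Prop) := by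
  have hs : Subrelation ((· < ·) : O2.{u} → O2.{u} → Prop)
      (InvImage (· < ·) (Subtype.val : O2.{u} → Ordinal.{u})) := fun h => h
  exact Subrelation.wf hs (InvImage.wf _ Ordinal.lt_wf)

def step (β : O2) (IH : ∀ α, α < β → Pkg α) : Pkg β :=
  ⟨(exists_step β (fun α hα => (IH α hα).val)
      (fun α hα ξ hξ => (IH α hα).2 ξ hξ)).choose,
   (exists_step β (fun α hα => (IH α hα).val)
      (fun α hα ξ hξ => (IH α hα).2 ξ hξ)).choose_spec.1⟩

lemma step_spec (β : O2) (IH : ∀ α, α < β → Pkg α) :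
    ∀ α (hα : α < β), Set.Countable {ξ | (step β IH).val ξ = (IH α hα).val ξ} :=
  (exists_step β (fun α hα => (IH α hα).val)
      (fun α hα ξ hξ => (IH α hα).2 ξ hξ)).choose_spec.2

def sigAux : ∀ β : O2, Pkg β := wfO2.fix step

lemma sigAux_eq (β : O2) : sigAux β = step β (fun α _ => sigAux α) :=
  wfO2.fix_eq step β

/-- The main family, in a single universe. -/
lemma main_single : ∀ α β : O2.{u}, α < β →
    Set.Countable {ξ : O2.{u} | (sigAux α).val ξ = (sigAux β).val ξ} := by
  intro α β hαβ
  have hc : Set.Countable {ξ | (sigAux β).val ξ = (sigAux α).val ξ} := by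
    have := step_spec β (fun α _ => sigAux α) α hαβ
    rwa [← sigAux_eq β] at this
  refine Set.Countable.mono ?_ hc
  intro ξ hξ
  exact hξ.symm

universe v

lemma lift_ord_aleph2 :
    Ordinal.lift.{v} ((Cardinal.aleph.{u} 2).ord) = (Cardinal.aleph.{max u v} 2).ord := by
  rw [Cardinal.lift_ord, Cardinal.lift_aleph, Ordinal.lift_ofNat]

lemma lift_ord_aleph1 :
    Ordinal.lift.{v} ((Cardinal.aleph.{u} 1).ord) = (Cardinal.aleph.{max u v} 1).ord := by
  rw [Cardinal.lift_ord, Cardinal.lift_aleph, Ordinal.lift_one]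

/-- Lifting ω₂'s initial segment across universes. -/
def up2 (x : O2.{u}) : O2.{max u v} :=
  ⟨Ordinal.lift.{v} x.1, by
    have h2 := Ordinal.lift_lt.mpr x.2
    rwa [lift_ord_aleph2.{u,v}] at h2⟩

lemma up2_lt {x y : O2.{u}} (h : x < y) : up2.{u,v} x < up2.{u,v} y := by
  have : x.1 < y.1 := h
  exact Ordinal.lift_lt.mpr this

lemma up2_inj : Function.Injective (up2.{u,v}) := by
  intro x y hxy
  have := congrArg Subtype.val hxy
  exact Subtype.ext (Ordinal.lift_inj.mp this)

/-- Lifting ω₁'s initial segment across universes. -/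
def up1 (x : O1.{u}) : O1.{max u v} :=
  ⟨Ordinal.lift.{v} x.1, by
    have h2 := Ordinal.lift_lt.mpr x.2
    rwa [lift_ord_aleph1.{u,v}] at h2⟩

lemma up1_bij : Function.Bijective (up1.{u,v}) := by
  constructor
  · intro x y hxy
    have := congrArg Subtype.val hxy
    exact Subtype.ext (Ordinal.lift_inj.mp this)
  · intro y
    have hy : y.1 ≤ Ordinal.lift.{v} ((Cardinal.aleph.{u} 1).ord) := by
      rw [lift_ord_aleph1.{u,v}]; exact le_of_lt y.2
    obtain ⟨x, hx⟩ := Ordinal.mem_range_lift_of_le hy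
    have hxlt : x < (Cardinal.aleph.{u} 1).ord := by
      have : Ordinal.lift.{v} x < Ordinal.lift.{v} ((Cardinal.aleph.{u} 1).ord) := by
        rw [hx, lift_ord_aleph1.{u,v}]; exact y.2
      exact Ordinal.lift_lt.mp this
    exact ⟨⟨x, hxlt⟩, Subtype.ext hx⟩

/-- Downward equivalence for ω₁ segments. -/
noncomputable def down1 : O1.{max u v} ≃ O1.{u} :=
  (Equiv.ofBijective _ up1_bij.{u,v}).symm

end SAD

end StronglyAD

theorem strongly_ad_functions_of_continuum_aleph_two
    (h : Cardinal.continuum = Cardinal.aleph 2) :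
    ∃ σ : {o : Ordinal // o < (Cardinal.aleph 2).ord} →
        {o : Ordinal // o < (Cardinal.aleph 2).ord} →
        {o : Ordinal // o < (Cardinal.aleph 1).ord},
      ∀ α β, α < β → Set.Countable {ξ | σ α ξ = σ β ξ} := by
  refine ⟨fun α ξ => SAD.down1.{u_4, max u_2 u_3}
    ((SAD.sigAux.{max (max u_2 u_3) u_4}
      (SAD.up2.{u_2, max u_3 u_4} α)).val (SAD.up2.{u_3, max u_2 u_4} ξ)), ?_⟩
  intro α β hαβ
  have hT := SAD.main_single.{max (max u_2 u_3) u_4}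
    (SAD.up2.{u_2, max u_3 u_4} α) (SAD.up2.{u_2, max u_3 u_4} β) (SAD.up2_lt hαβ)
  have hpre := Set.Countable.preimage hT (f := SAD.up2.{u_3, max u_2 u_4}) SAD.up2_inj
  refine Set.Countable.mono ?_ hpre
  intro ξ hξ
  simp only [Set.mem_setOf_eq] at hξ ⊢
  exact SAD.down1.injective hξ
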